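/- The map ρ that sorts the entries within each column of a semistandard skyline filling with basement b_i = i into decreasing order is a bijection from SSKI(n) (SSK with basement b_i = i and entries in [n]) onto the set CT(n) of contretableaux with entries in [n], and ρ preserves the set of entries in each column. -/

import Mathlib

open scoped Classical

/-! ## Words -/

def maxLetter (w : List ℕ) : ℕ := w.foldr max 0

def ContreUpTo (r : ℕ) (w : List ℕ) : Prop :=
  ∀ i j : ℕ, 1 < j → j ≤ r → (w.take i).count (j - 1) ≤ (w.take i).count j

def IsContreLattice (w : List ℕ) : Prop := ContreUpTo (maxLetter w) w

def IsRegularContreLattice (w : List ℕ) : Prop :=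
  IsContreLattice w ∧ (∀ x ∈ w, 1 ≤ x) ∧ 1 ∈ w

def IsLatticeWord (w : List ℕ) : Prop :=
  ∀ i j : ℕ, 1 ≤ j → (w.take i).count (j + 1) ≤ (w.take i).count j

/-! ## Skyline fillings -/

structure SkylineFilling (n : ℕ) where
  shape : Fin n → ℕ
  inner : Fin n → ℕ
  basement : Fin n → ℕ
  entry : Fin n → ℕ → ℕ

namespace SkylineFilling

variable {n : ℕ}

def Inversion (a b c : ℕ) : Prop := (b < a ∧ a ≤ c) ∨ (a ≤ c ∧ c < b)

def IsSSK (F : SkylineFilling n) : Prop :=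
  (∀ i, F.inner i ≤ F.shape i) ∧
  (∀ i : Fin n, ∀ k : ℕ, k ≤ F.inner i → F.entry i k = F.basement i) ∧
  (∀ i : Fin n, F.entry i 0 = F.basement i) ∧
  (∀ i : Fin n, ∀ k : ℕ, k + 1 ≤ F.shape i → F.entry i (k + 1) ≤ F.entry i k) ∧
  (∀ i j : Fin n, ∀ k : ℕ, i < j → F.shape j ≤ F.shape i → 1 ≤ k → k ≤ F.shape j →
      Inversion (F.entry i k) (F.entry j k) (F.entry i (k - 1))) ∧
  (∀ i j : Fin n, ∀ k : ℕ, i < j → F.shape i < F.shape j → k ≤ F.shape i → k + 1 ≤ F.shape j →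
      Inversion (F.entry j (k + 1)) (F.entry i k) (F.entry j k))

def EntriesIn (F : SkylineFilling n) (m : ℕ) : Prop :=
  ∀ i : Fin n, ∀ k : ℕ, F.inner i < k → k ≤ F.shape i →
    1 ≤ F.entry i k ∧ F.entry i k ≤ m

def Normalized (F : SkylineFilling n) : Prop :=
  ∀ i : Fin n, ∀ k : ℕ, F.shape i < k → F.entry i k = 0

def colList (F : SkylineFilling n) (k : ℕ) : List ℕ :=
  (List.finRange n).filterMap fun i =>
    if F.inner i < k ∧ k ≤ F.shape i then some (F.entry i k) else none

def width (F : SkylineFilling n) : ℕ := Finset.univ.sup F.shape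

def colWord (F : SkylineFilling n) : List ℕ :=
  ((List.range F.width).reverse.map fun k => F.colList (k + 1)).flatten

def looseWord (F : SkylineFilling n) : List ℕ :=
  ((List.range F.width).reverse.map fun k =>
    List.insertionSort (· ≥ ·) (F.colList (k + 1))).flatten

def colSet (F : SkylineFilling n) (k : ℕ) : Finset ℕ := (F.colList k).toFinset

def rowWord (F : SkylineFilling n) : List ℕ :=
  ((List.finRange n).reverse.map fun i =>
    (List.range (F.shape i - F.inner i)).map fun t => F.entry i (F.inner i + 1 + t)).flatten

def count (F : SkylineFilling n) (v : ℕ) : ℕ := F.rowWord.count v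

/-- The content of `F` is `lam*`, the reverse of the partition `lam` (which has `r` parts). -/
def ContentRev (F : SkylineFilling n) (lam : ℕ → ℕ) (r : ℕ) : Prop :=
  ∀ v : ℕ, F.count v = if 1 ≤ v ∧ v ≤ r then lam (r - v) else 0

end SkylineFilling

/-! ## Fillings of Ferrers shapes (CT and SSYT) -/

structure Filling (n : ℕ) where
  shape : Fin n → ℕ
  entry : Fin n → ℕ → ℕ

namespace Filling

variable {n : ℕ}

def IsCT (F : Filling n) (m : ℕ) : Prop :=
  (∀ i j : Fin n, i ≤ j → F.shape j ≤ F.shape i) ∧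
  (∀ i : Fin n, ∀ k : ℕ, 1 ≤ k → k + 1 ≤ F.shape i → F.entry i (k + 1) ≤ F.entry i k) ∧
  (∀ i j : Fin n, ∀ k : ℕ, i < j → 1 ≤ k → k ≤ F.shape j → F.entry j k < F.entry i k) ∧
  (∀ i : Fin n, ∀ k : ℕ, 1 ≤ k → k ≤ F.shape i → 1 ≤ F.entry i k ∧ F.entry i k ≤ m) ∧
  (∀ i : Fin n, ∀ k : ℕ, k = 0 ∨ F.shape i < k → F.entry i k = 0)

def IsSSYT (F : Filling n) (m : ℕ) : Prop :=
  (∀ i j : Fin n, i ≤ j → F.shape j ≤ F.shape i) ∧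
  (∀ i : Fin n, ∀ k : ℕ, 1 ≤ k → k + 1 ≤ F.shape i → F.entry i k ≤ F.entry i (k + 1)) ∧
  (∀ i j : Fin n, ∀ k : ℕ, i < j → 1 ≤ k → k ≤ F.shape j → F.entry i k < F.entry j k) ∧
  (∀ i : Fin n, ∀ k : ℕ, 1 ≤ k → k ≤ F.shape i → 1 ≤ F.entry i k ∧ F.entry i k ≤ m) ∧
  (∀ i : Fin n, ∀ k : ℕ, k = 0 ∨ F.shape i < k → F.entry i k = 0)

def word (F : Filling n) : List ℕ :=
  ((List.finRange n).map fun i =>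
    (List.range (F.shape i)).map fun t => F.entry i (t + 1)).flatten

def count (F : Filling n) (v : ℕ) : ℕ := F.word.count v

def colList (F : Filling n) (k : ℕ) : List ℕ :=
  (List.finRange n).filterMap fun i =>
    if 1 ≤ k ∧ k ≤ F.shape i then some (F.entry i k) else none

def ContentRev (F : Filling n) (lam : ℕ → ℕ) (r : ℕ) : Prop :=
  ∀ v : ℕ, F.count v = if 1 ≤ v ∧ v ≤ r then lam (r - v) else 0

end Filling

/-! ## Generating polynomials -/

noncomputable def schurPoly (n : ℕ) (lam : ℕ → ℕ) : MvPolynomial (Fin n) ℤ :=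
  ∑ μ ∈ Finset.Nat.antidiagonalTuple n (∑ i ∈ Finset.range n, lam i),
    (Nat.card {T : Filling n // T.shape = (fun i => lam i.val) ∧ T.IsSSYT n ∧
        ∀ v : Fin n, T.count (v.val + 1) = μ v}) •
      MvPolynomial.monomial (Finsupp.equivFunOnFinite.symm μ) (1 : ℤ)

noncomputable def atomPoly (n : ℕ) (γ : Fin n → ℕ) : MvPolynomial (Fin n) ℤ :=
  ∑ μ ∈ Finset.Nat.antidiagonalTuple n (∑ i, γ i),
    (Nat.card {F : SkylineFilling n // F.shape = γ ∧ F.inner = (fun _ => 0) ∧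
        F.basement = (fun i : Fin n => (i : ℕ) + 1) ∧ F.IsSSK ∧ F.EntriesIn n ∧ F.Normalized ∧
        ∀ v : Fin n, F.count (v.val + 1) = μ v}) •
      MvPolynomial.monomial (Finsupp.equivFunOnFinite.symm μ) (1 : ℤ)

noncomputable def qsPoly (n : ℕ) (α : List ℕ) : MvPolynomial (Fin n) ℤ :=
  ∑ γ ∈ (Finset.Nat.antidiagonalTuple n α.sum).filter
      (fun γ => (List.ofFn γ).filter (· != 0) = α),
    atomPoly n γ

noncomputable def charPoly (n : ℕ) (γ : Fin n → ℕ) : MvPolynomial (Fin n) ℤ :=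
  ∑ μ ∈ Finset.Nat.antidiagonalTuple n (∑ i, γ i),
    (Nat.card {F : SkylineFilling n // F.shape = (fun i => γ i.rev) ∧ F.inner = (fun _ => 0) ∧
        F.basement = (fun i : Fin n => n - (i : ℕ)) ∧ F.IsSSK ∧ F.EntriesIn n ∧ F.Normalized ∧
        ∀ v : Fin n, F.count (v.val + 1) = μ v}) •
      MvPolynomial.monomial (Finsupp.equivFunOnFinite.symm μ) (1 : ℤ)

noncomputable def lrsCount (n : ℕ) (γ δ : Fin n → ℕ) (lam : ℕ → ℕ) (r : ℕ) : ℕ :=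
  Nat.card {F : SkylineFilling n // F.shape = δ ∧ F.inner = γ ∧
    F.basement = (fun i : Fin n => 2 * n - (i : ℕ)) ∧ F.IsSSK ∧ F.EntriesIn n ∧ F.Normalized ∧
    IsRegularContreLattice F.colWord ∧ F.ContentRev lam r}

noncomputable def lrkCount (n : ℕ) (γ δ : Fin n → ℕ) (lam : ℕ → ℕ) (r : ℕ) : ℕ :=
  Nat.card {F : SkylineFilling n // F.shape = (fun i => δ i.rev) ∧
    F.inner = (fun i => γ i.rev) ∧
    F.basement = (fun i : Fin n => n + 1 + (i : ℕ)) ∧ F.IsSSK ∧ F.EntriesIn n ∧ F.Normalized ∧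
    IsRegularContreLattice F.colWord ∧ F.ContentRev lam r}

noncomputable def lrcCount (n : ℕ) (αl βl : List ℕ) (lam : ℕ → ℕ) (r : ℕ) : ℕ :=
  Nat.card (Quot (fun (L₁ L₂ : {F : SkylineFilling n //
      F.basement = (fun i : Fin n => 2 * n - (i : ℕ)) ∧ F.IsSSK ∧ F.EntriesIn n ∧ F.Normalized ∧
      IsRegularContreLattice F.colWord ∧ F.ContentRev lam r ∧
      (List.ofFn F.shape).filter (· != 0) = βl ∧
      (List.ofFn F.inner).filter (· != 0) = αl}) =>
    ∀ k : ℕ, L₁.1.colSet k = L₂.1.colSet k))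

def IsRemComp (a b : List ℕ) (k : ℕ) : Prop :=
  ∃ u v : List ℕ, b = u ++ k :: v ∧ k ∉ v ∧
    a = u ++ (if k = 1 then v else (k - 1) :: v)


/-! ## Auxiliary development for stmt8 -/

section StmtAux

open Finset

lemma natDC (S : Finset ℕ) (h : ∀ a b : ℕ, a ≤ b → b ∈ S → a ∈ S) (k : ℕ) :
    k ∈ S ↔ k < S.card := by
  constructor
  · intro hk
    have hsub : Finset.range (k + 1) ⊆ S := fun a ha =>
      h a k (Nat.lt_succ_iff.mp (Finset.mem_range.mp ha)) hk
    have := Finset.card_le_card hsub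
    simpa using this
  · intro hk
    by_contra hks
    have hsub : S ⊆ Finset.range k := by
      intro a ha
      rw [Finset.mem_range]
      by_contra hak
      exact hks (h k a (le_of_not_gt hak) ha)
    have := Finset.card_le_card hsub
    simp at this
    omega

lemma finDC {n : ℕ} (S : Finset (Fin n)) (h : ∀ a b : Fin n, a ≤ b → b ∈ S → a ∈ S)
    (k : Fin n) : k ∈ S ↔ (k : ℕ) < S.card := by
  have hcard : (S.image Fin.val).card = S.card :=
    Finset.card_image_of_injective _ Fin.val_injective
  have hDC : ∀ a b : ℕ, a ≤ b → b ∈ S.image Fin.val → a ∈ S.image Fin.val := by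
    intro a b hab hb
    rcases Finset.mem_image.mp hb with ⟨c, hc, rfl⟩
    have ha : a < n := lt_of_le_of_lt hab c.isLt
    exact Finset.mem_image.mpr ⟨⟨a, ha⟩, h ⟨a, ha⟩ c hab hc, rfl⟩
  have hiff := natDC (S.image Fin.val) hDC (k : ℕ)
  rw [hcard] at hiff
  rw [← hiff]
  constructor
  · intro hk; exact Finset.mem_image.mpr ⟨k, hk, rfl⟩
  · intro hk
    rcases Finset.mem_image.mp hk with ⟨c, hc, hck⟩
    have : c = k := Fin.ext hck
    rwa [← this]

lemma finCardLt {n : ℕ} (m : ℕ) (hm : m ≤ n) :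
    (Finset.univ.filter fun j : Fin n => (j : ℕ) < m).card = m := by
  rw [← Finset.card_range m]
  refine Finset.card_bij (fun j _ => (j : ℕ)) ?_ ?_ ?_
  · intro a ha; simp at ha ⊢; omega
  · intro a ha b hb hab; exact Fin.ext hab
  · intro b hb
    simp at hb
    exact ⟨⟨b, lt_of_lt_of_le hb hm⟩, by simp [hb], rfl⟩

lemma finCardGe {n : ℕ} (a : ℕ) :
    (Finset.univ.filter fun j : Fin n => a ≤ (j : ℕ)).card = n - a := by
  rw [← Nat.card_Ico a n]
  refine Finset.card_bij (fun j _ => (j : ℕ)) ?_ ?_ ?_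
  · intro x hx
    simp at hx
    exact Finset.mem_Ico.mpr ⟨hx, x.isLt⟩
  · intro x hx y hy hxy; exact Fin.ext hxy
  · intro b hb
    simp [Finset.mem_Ico] at hb
    exact ⟨⟨b, hb.2⟩, by simp [hb.1], rfl⟩

/-- A valid assignment of the values in `D` to rows, on top of the previous column `prev`. -/
def ValidCol (n : ℕ) (D : Finset ℕ) (prev col : Fin n → ℕ) : Prop :=
  (∀ i, col i ≠ 0 → col i ∈ D ∧ col i ≤ prev i) ∧
  (∀ v ∈ D, ∃ i, col i = v) ∧
  (∀ i j : Fin n, i < j → col j ≠ 0 → col j ≤ prev i → col j < col i)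

lemma valid_card {n : ℕ} {D : Finset ℕ} {prev col : Fin n → ℕ}
    (hV : ValidCol n D prev col) (v : ℕ) (hv : 1 ≤ v) :
    (Finset.univ.filter fun i : Fin n => v ≤ col i).card = (D.filter fun x => v ≤ x).card := by
  refine Finset.card_bij (fun i _ => col i) ?_ ?_ ?_
  · intro i hi
    simp at hi
    have hne : col i ≠ 0 := by omega
    exact Finset.mem_filter.mpr ⟨(hV.1 i hne).1, hi⟩
  · intro i hi j hj hij
    simp at hi hj
    have hij' : col i = col j := hij
    by_contra hne
    rcases lt_or_gt_of_ne hne with h | h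
    · have := hV.2.2 i j h (by omega) (by rw [← hij']; exact (hV.1 i (by omega)).2)
      omega
    · have := hV.2.2 j i h (by omega) (by rw [hij']; exact (hV.1 j (by omega)).2)
      omega
  · intro w hw
    simp [Finset.mem_filter] at hw
    obtain ⟨i, hi⟩ := hV.2.1 w hw.1
    exact ⟨i, by simp [hi, hw.2], hi⟩

lemma valid_unique {n : ℕ} {D : Finset ℕ} {prev col col' : Fin n → ℕ}
    (hV : ValidCol n D prev col) (hV' : ValidCol n D prev col') : col = col' := by
  have main : ∀ c : ℕ, ∀ v : ℕ, v ≠ 0 → (D.filter fun x => v < x).card ≤ c →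
      (∀ i, col i = v → col' i = v) ∧ (∀ i, col' i = v → col i = v) := by
    intro c
    induction c using Nat.strong_induction_on with
    | _ c ih =>
      intro v hv hc
      have key : ∀ A B : Fin n → ℕ, ValidCol n D prev A → ValidCol n D prev B →
          (∀ w, v < w → w ∈ D → (∀ i, A i = w → B i = w) ∧ (∀ i, B i = w → A i = w)) →
          ∀ i, A i = v → B i = v := by
        intro A B hA hB ihAB i hi
        have hAne : A i ≠ 0 := by rw [hi]; exact hv
        have hAi := hA.1 i hAne
        rw [hi] at hAi
        obtain ⟨j, hj⟩ := hB.2.1 v hAi.1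
        by_contra hne
        have hij : i ≠ j := fun h => hne (h ▸ hj)
        have hBjne : B j ≠ 0 := by rw [hj]; exact hv
        rcases lt_or_gt_of_ne hij with h | h
        · have hlt := hB.2.2 i j h hBjne (by rw [hj]; exact hAi.2)
          rw [hj] at hlt
          have hBine : B i ≠ 0 := by omega
          have hwD := (hB.1 i hBine).1
          have := (ihAB (B i) hlt hwD).2 i rfl
          omega
        · have hprev : A i ≤ prev j := by
            rw [hi]
            have h2 := (hB.1 j hBjne).2
            rwa [hj] at h2
          have hlt := hA.2.2 j i h hAne hprev
          rw [hi] at hlt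
          have hAjne : A j ≠ 0 := by omega
          have hwD := (hA.1 j hAjne).1
          have := (ihAB (A j) hlt hwD).1 j rfl
          omega
      have ihW : ∀ w, v < w → w ∈ D →
          (∀ i, col i = w → col' i = w) ∧ (∀ i, col' i = w → col i = w) := by
        intro w hvw hwD
        have hss : (D.filter fun x => w < x) ⊂ (D.filter fun x => v < x) := by
          constructor
          · intro x hx
            simp [Finset.mem_filter] at hx ⊢
            exact ⟨hx.1, by omega⟩
          · intro hsub
            have hmem : w ∈ D.filter fun x => v < x := Finset.mem_filter.mpr ⟨hwD, hvw⟩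
            have := hsub hmem
            simp [Finset.mem_filter] at this
        have hlt := Finset.card_lt_card hss
        exact ih ((D.filter fun x => w < x).card) (by omega) w (by omega) le_rfl
      exact ⟨key col col' hV hV' ihW,
        key col' col hV' hV (fun w hw hwD => ⟨(ihW w hw hwD).2, (ihW w hw hwD).1⟩)⟩
  funext i
  by_cases h : col i = 0
  · by_contra hne
    have h' : col' i ≠ 0 := by rw [h] at hne; exact fun hh => hne hh.symm
    have := (main _ (col' i) h' le_rfl).2 i rfl
    omega
  · have := (main _ (col i) h le_rfl).1 i rfl
    omega

end StmtAux

section StmtAux2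

open Finset

/-- Greedy placement of the values of `D` into rows, each value `v` (taken in decreasing
order) going to the topmost row whose previous entry is at least `v`. -/
noncomputable def place (n : ℕ) : Finset ℕ → (Fin n → ℕ) → (Fin n → ℕ)
  | D, prev =>
    if h : D.Nonempty then
      if hr : (Finset.univ.filter fun i : Fin n => D.max' h ≤ prev i).Nonempty then
        Function.update
          (place n (D.erase (D.max' h))
            (Function.update prev ((Finset.univ.filter fun i : Fin n => D.max' h ≤ prev i).min' hr) 0))
          ((Finset.univ.filter fun i : Fin n => D.max' h ≤ prev i).min' hr) (D.max' h)
      else place n (D.erase (D.max' h)) prev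
    else fun _ => 0
  termination_by D _ => D.card
  decreasing_by all_goals exact Finset.card_erase_lt_of_mem (Finset.max'_mem _ _)

lemma place_empty (n : ℕ) (prev : Fin n → ℕ) : place n ∅ prev = fun _ => 0 := by
  rw [place]
  simp

lemma place_valid {n : ℕ} : ∀ (c : ℕ) (D : Finset ℕ) (prev : Fin n → ℕ), D.card ≤ c → 0 ∉ D →
    (∀ v, 1 ≤ v → (D.filter fun x => v ≤ x).card ≤
      (Finset.univ.filter fun i : Fin n => v ≤ prev i).card) →
    ValidCol n D prev (place n D prev) := by
  intro c
  induction c with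
  | zero =>
    intro D prev hc h0 hcnt
    have hD : D = ∅ := Finset.card_eq_zero.mp (Nat.le_zero.mp hc)
    subst hD
    rw [place_empty]
    refine ⟨fun i hi => absurd rfl hi, fun v hv => absurd hv (Finset.notMem_empty v),
      fun i j _ hj _ => absurd rfl hj⟩
  | succ c ih =>
    intro D prev hc h0 hcnt
    rcases D.eq_empty_or_nonempty with rfl | h
    · rw [place_empty]
      refine ⟨fun i hi => absurd rfl hi, fun v hv => absurd hv (Finset.notMem_empty v),
        fun i j _ hj _ => absurd rfl hj⟩
    · set v := D.max' h with hvdef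
      have hvD : v ∈ D := D.max'_mem h
      have hv1 : 1 ≤ v := by
        rcases Nat.eq_zero_or_pos v with h' | h'
        · exact absurd (h' ▸ hvD) h0
        · exact h'
      have hfilter_ne : (Finset.univ.filter fun i : Fin n => v ≤ prev i).Nonempty := by
        rw [← Finset.card_pos]
        have h1 : 0 < (D.filter fun x => v ≤ x).card :=
          Finset.card_pos.mpr ⟨v, Finset.mem_filter.mpr ⟨hvD, le_rfl⟩⟩
        exact lt_of_lt_of_le h1 (hcnt v hv1)
      set r := (Finset.univ.filter fun i : Fin n => v ≤ prev i).min' hfilter_ne with hrdef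
      have hrmem : r ∈ Finset.univ.filter fun i : Fin n => v ≤ prev i :=
        Finset.min'_mem _ _
      have hrprev : v ≤ prev r := (Finset.mem_filter.mp hrmem).2
      have hrmin : ∀ i : Fin n, v ≤ prev i → r ≤ i := fun i hi =>
        Finset.min'_le _ _ (Finset.mem_filter.mpr ⟨Finset.mem_univ i, hi⟩)
      set D' := D.erase v with hD'def
      set prev' := Function.update prev r 0 with hprev'def
      have hpl : place n D prev = Function.update (place n D' prev') r v := by
        rw [place]
        rw [dif_pos h, dif_pos hfilter_ne]
      -- counting hypothesis for the recursive call
      have hcnt' : ∀ w, 1 ≤ w → (D'.filter fun x => w ≤ x).card ≤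
          (Finset.univ.filter fun i : Fin n => w ≤ prev' i).card := by
        intro w hw
        by_cases hwv : w ≤ v
        · have hDsplit : (D'.filter fun x => w ≤ x) = (D.filter fun x => w ≤ x).erase v := by
            rw [hD'def, Finset.filter_erase]
          have hvmem : v ∈ D.filter fun x => w ≤ x := Finset.mem_filter.mpr ⟨hvD, hwv⟩
          have hPsplit : (Finset.univ.filter fun i : Fin n => w ≤ prev' i) =
              (Finset.univ.filter fun i : Fin n => w ≤ prev i).erase r := by
            ext i
            by_cases hir : i = r
            · subst hir
              simp [hprev'def, Function.update_self]
              omega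
            · simp [hprev'def, Function.update_of_ne hir, hir]
          have hre : r ∈ Finset.univ.filter fun i : Fin n => w ≤ prev i :=
            Finset.mem_filter.mpr ⟨Finset.mem_univ r, le_trans hwv hrprev⟩
          rw [hDsplit, hPsplit, Finset.card_erase_of_mem hvmem, Finset.card_erase_of_mem hre]
          exact Nat.sub_le_sub_right (hcnt w hw) 1
        · have : (D'.filter fun x => w ≤ x) = ∅ := by
            apply Finset.filter_eq_empty_iff.mpr
            intro x hx
            have hxD : x ∈ D := Finset.mem_of_mem_erase hx
            have := D.le_max' x hxD
            omega
          rw [this]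
          simp
      have h0' : 0 ∉ D' := fun h' => h0 (Finset.mem_of_mem_erase h')
      have hcard' : D'.card ≤ c := by
        have h1 : D'.card = D.card - 1 := by rw [hD'def]; exact Finset.card_erase_of_mem hvD
        have h2 : 0 < D.card := Finset.card_pos.mpr h
        omega
      have hV' := ih D' prev' hcard' h0' hcnt'
      set col' := place n D' prev' with hcol'def
      have hcol'r : col' r = 0 := by
        by_contra hne
        have := (hV'.1 r hne).2
        rw [hprev'def] at this
        simp [Function.update_self] at this
        exact hne this
      rw [hpl]
      refine ⟨?_, ?_, ?_⟩
      · intro i hi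
        by_cases hir : i = r
        · subst hir
          simp [Function.update_self]
          exact ⟨hvD, hrprev⟩
        · rw [Function.update_of_ne hir] at hi ⊢
          obtain ⟨hmem, hle⟩ := hV'.1 i hi
          refine ⟨Finset.mem_of_mem_erase hmem, ?_⟩
          rwa [hprev'def, Function.update_of_ne hir] at hle
      · intro w hw
        by_cases hwv : w = v
        · exact ⟨r, by rw [Function.update_self, hwv]⟩
        · obtain ⟨i, hi⟩ := hV'.2.1 w (Finset.mem_erase.mpr ⟨hwv, hw⟩)
          have hir : i ≠ r := by
            intro h'
            rw [h', hcol'r] at hi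
            have : w ≠ 0 := fun h'' => h0 (h'' ▸ hw)
            exact this hi.symm
          exact ⟨i, by rw [Function.update_of_ne hir]; exact hi⟩
      · intro i j hij hj hle
        by_cases hjr : j = r
        · subst hjr
          rw [Function.update_self] at hle
          have := hrmin i hle
          exact absurd hij (not_lt.mpr this)
        · rw [Function.update_of_ne hjr] at hj hle ⊢
          have hmem := (hV'.1 j hj).1
          have hjlt : col' j < v := by
            have h1 : col' j ≤ v := D.le_max' _ (Finset.mem_of_mem_erase hmem)
            have h2 : col' j ≠ v := (Finset.mem_erase.mp hmem).1
            omega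
          by_cases hir : i = r
          · subst hir
            rw [Function.update_self]
            exact hjlt
          · rw [Function.update_of_ne hir]
            exact hV'.2.2 i j hij hj (by rwa [hprev'def, Function.update_of_ne hir])
end StmtAux2

section StmtAux3

open Finset

/-- The defining property of SSKI(n) from the theorem statement. -/
def SSKIprop (n : ℕ) (F : SkylineFilling n) : Prop :=
  F.inner = (fun _ => 0) ∧ F.basement = (fun i : Fin n => (i : ℕ) + 1) ∧
    F.IsSSK ∧ F.EntriesIn n ∧ F.Normalized

namespace SSKIfacts

variable {n : ℕ} {F : SkylineFilling n} (hF : SSKIprop n F)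

include hF

lemma e0 (i : Fin n) : F.entry i 0 = (i : ℕ) + 1 := by
  rw [hF.2.2.1.2.2.1, hF.2.1]

lemma rowdec (i : Fin n) (k : ℕ) (hk : k + 1 ≤ F.shape i) :
    F.entry i (k + 1) ≤ F.entry i k := hF.2.2.1.2.2.2.1 i k hk

lemma pos (i : Fin n) (k : ℕ) (h1 : 1 ≤ k) (h2 : k ≤ F.shape i) : 1 ≤ F.entry i k := by
  have := hF.2.2.2.1 i k (by simp only [hF.1]; omega) h2
  exact this.1

lemma le_n (i : Fin n) (k : ℕ) (h1 : 1 ≤ k) (h2 : k ≤ F.shape i) : F.entry i k ≤ n := by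
  have := hF.2.2.2.1 i k (by simp only [hF.1]; omega) h2
  exact this.2

lemma zero (i : Fin n) (k : ℕ) (h : F.shape i < k) : F.entry i k = 0 := hF.2.2.2.2 i k h

lemma ne_zero_iff (i : Fin n) (k : ℕ) (h1 : 1 ≤ k) :
    F.entry i k ≠ 0 ↔ k ≤ F.shape i := by
  constructor
  · intro h
    by_contra hc
    exact h (zero hF i k (by omega))
  · intro h
    have := pos hF i k h1 h
    omega

lemma rowdec' (i : Fin n) (k : ℕ) (h1 : 1 ≤ k) (h2 : k ≤ F.shape i) :
    F.entry i k ≤ F.entry i (k - 1) := by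
  have h := rowdec hF i (k - 1) (by omega)
  have : k - 1 + 1 = k := by omega
  rwa [this] at h

lemma claimB (i j : Fin n) (hij : i < j) (hsh : F.shape i < F.shape j) :
    ∀ k, 1 ≤ k → k ≤ F.shape i + 1 → k ≤ F.shape j → F.entry i (k - 1) < F.entry j k := by
  intro k
  induction k with
  | zero => omega
  | succ k ihk =>
    intro h1 h2 h3
    have hB := hF.2.2.1.2.2.2.2.2 i j k hij hsh (by omega) h3
    rcases Nat.eq_zero_or_pos k with rfl | hk1
    · -- base case, k + 1 = 1
      rcases hB with ⟨hlt, _⟩ | ⟨_, hgt⟩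
      · simpa using hlt
      · rw [e0 hF i, e0 hF j] at hgt
        have : (i : ℕ) < j := hij
        omega
    · rcases hB with ⟨hlt, _⟩ | ⟨_, hgt⟩
      · simpa using hlt
      · exfalso
        have hih := ihk hk1 (by omega) (by omega)
        have hrd := rowdec' hF i k hk1 (by omega)
        omega

lemma mem_colSet_iff {k : ℕ} {v : ℕ} (hk : 1 ≤ k) :
    v ∈ F.colSet k ↔ ∃ i : Fin n, k ≤ F.shape i ∧ F.entry i k = v := by
  rw [SkylineFilling.colSet, List.mem_toFinset, SkylineFilling.colList, List.mem_filterMap]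
  constructor
  · rintro ⟨i, _, hi⟩
    by_cases hc : F.inner i < k ∧ k ≤ F.shape i
    · rw [if_pos hc] at hi
      exact ⟨i, hc.2, Option.some_inj.mp hi⟩
    · rw [if_neg hc] at hi
      exact absurd hi (by simp)
  · rintro ⟨i, hsh, he⟩
    refine ⟨i, List.mem_finRange i, ?_⟩
    rw [if_pos ⟨by simp only [hF.1]; omega, hsh⟩, he]

lemma colSet_subset (k : ℕ) (hk : 1 ≤ k) : F.colSet k ⊆ Finset.Icc 1 n := by
  intro v hv
  obtain ⟨i, hsh, he⟩ := (mem_colSet_iff hF hk).mp hv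
  rw [Finset.mem_Icc, ← he]
  exact ⟨pos hF i k hk hsh, le_n hF i k hk hsh⟩

lemma zero_not_mem_colSet (k : ℕ) (hk : 1 ≤ k) : 0 ∉ F.colSet k := by
  intro h
  have := colSet_subset hF k hk h
  simp at this

lemma valid_of_ssk (k : ℕ) (hk : 1 ≤ k) :
    ValidCol n (F.colSet k) (fun i => F.entry i (k - 1)) (fun i => F.entry i k) := by
  refine ⟨?_, ?_, ?_⟩
  · intro i hi
    have hsh : k ≤ F.shape i := (ne_zero_iff hF i k hk).mp hi
    exact ⟨(mem_colSet_iff hF hk).mpr ⟨i, hsh, rfl⟩, rowdec' hF i k hk hsh⟩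
  · intro v hv
    obtain ⟨i, _, he⟩ := (mem_colSet_iff hF hk).mp hv
    exact ⟨i, he⟩
  · intro i j hij hj hle
    simp only at hj hle ⊢
    have hshj : k ≤ F.shape j := (ne_zero_iff hF j k hk).mp hj
    have hv1 : 1 ≤ F.entry j k := pos hF j k hk hshj
    by_cases hsi : k ≤ F.shape i
    · by_cases hss : F.shape j ≤ F.shape i
      · have hA := hF.2.2.1.2.2.2.2.1 i j k hij hss hk hshj
        rcases hA with ⟨h1, _⟩ | ⟨_, h2⟩
        · exact h1
        · omega
      · have := claimB hF i j hij (by omega) k hk (by omega) hshj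
        omega
    · -- row i ends before column k
      by_cases hsi2 : F.shape i < k - 1
      · have := zero hF i (k - 1) hsi2
        omega
      · have hshi : F.shape i = k - 1 := by omega
        have := claimB hF i j hij (by omega) k hk (by omega) hshj
        omega

lemma card_colSet_eq (k : ℕ) (hk : 1 ≤ k) :
    (Finset.univ.filter fun i : Fin n => 1 ≤ F.entry i k).card = (F.colSet k).card := by
  have h := valid_card (valid_of_ssk hF k hk) 1 le_rfl
  rw [h]
  congr 1
  apply Finset.filter_true_of_mem
  intro x hx
  have := colSet_subset hF k hk hx
  rw [Finset.mem_Icc] at this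
  omega

lemma count_colSet_eq (k : ℕ) (hk : 1 ≤ k) (v : ℕ) (hv : 1 ≤ v) :
    (Finset.univ.filter fun i : Fin n => v ≤ F.entry i k).card =
      ((F.colSet k).filter fun x => v ≤ x).card :=
  valid_card (valid_of_ssk hF k hk) v hv

lemma count_mono (k : ℕ) (hk : 1 ≤ k) (v : ℕ) (hv : 1 ≤ v) :
    ((F.colSet (k + 1)).filter fun x => v ≤ x).card ≤
      ((F.colSet k).filter fun x => v ≤ x).card := by
  rw [← count_colSet_eq hF (k + 1) (by omega) v hv, ← count_colSet_eq hF k hk v hv]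
  apply Finset.card_le_card
  intro i hi
  simp at hi ⊢
  have hne : F.entry i (k + 1) ≠ 0 := by omega
  have hsh : k + 1 ≤ F.shape i := (ne_zero_iff hF i (k + 1) (by omega)).mp hne
  have := rowdec hF i k hsh
  omega

lemma card_colSet_mono (k : ℕ) (hk : 1 ≤ k) :
    (F.colSet (k + 1)).card ≤ (F.colSet k).card := by
  rw [← card_colSet_eq hF (k + 1) (by omega), ← card_colSet_eq hF k hk]
  apply Finset.card_le_card
  intro i hi
  simp at hi ⊢
  have hne : F.entry i (k + 1) ≠ 0 := by omega
  have hsh : k + 1 ≤ F.shape i := (ne_zero_iff hF i (k + 1) (by omega)).mp hne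
  have := rowdec hF i k hsh
  omega

lemma colSet_zero : F.colSet 0 = ∅ := by
  rw [SkylineFilling.colSet, SkylineFilling.colList]
  have : ∀ i : Fin n, (if F.inner i < 0 ∧ 0 ≤ F.shape i then some (F.entry i 0) else none) = none := by
    intro i
    rw [if_neg]
    rintro ⟨h, -⟩
    omega
  simp [this]

lemma colSet_empty_of_wide (k : ℕ) (hk : F.width < k) : F.colSet k = ∅ := by
  rcases Nat.eq_zero_or_pos k with rfl | hk1
  · exact colSet_zero hF
  · rw [Finset.eq_empty_iff_forall_notMem]
    intro v hv
    obtain ⟨i, hsh, -⟩ := (mem_colSet_iff hF hk1).mp hv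
    have : F.shape i ≤ F.width := Finset.le_sup (Finset.mem_univ i)
    omega

lemma shape_le_width (i : Fin n) : F.shape i ≤ F.width := Finset.le_sup (Finset.mem_univ i)

lemma card_colSet_le_n (k : ℕ) (hk : 1 ≤ k) : (F.colSet k).card ≤ n := by
  have := Finset.card_le_card (colSet_subset hF k hk)
  simpa using this

end SSKIfacts

end StmtAux3

section StmtAux4

open Finset

/-- The strictly decreasing list of elements of a finite set of naturals. -/
def sdesc (D : Finset ℕ) : List ℕ := D.sort (· ≥ ·)

lemma sdesc_sorted (D : Finset ℕ) : (sdesc D).Pairwise (· > ·) := (Finset.sortedGT_sort D).pairwise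

lemma sdesc_length (D : Finset ℕ) : (sdesc D).length = D.card := Finset.length_sort _

lemma mem_sdesc {D : Finset ℕ} {x : ℕ} : x ∈ sdesc D ↔ x ∈ D := Finset.mem_sort _

lemma sdesc_nodup (D : Finset ℕ) : (sdesc D).Nodup := Finset.sort_nodup _ _

lemma sdesc_toFinset (D : Finset ℕ) : (sdesc D).toFinset = D := Finset.sort_toFinset _ _

lemma rank_of_sorted (L : List ℕ) (hL : L.Pairwise (· > ·)) (i : ℕ) (hi : i < L.length) :
    (L.toFinset.filter fun x => L[i] < x).card = i := by
  set a := L[i] with ha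
  have hfil : L.filter (fun x => decide (a < x)) = L.take i := by
    conv_lhs => rw [← List.take_append_drop i L]
    rw [List.filter_append]
    have h1 : (L.take i).filter (fun x => decide (a < x)) = L.take i := by
      rw [List.filter_eq_self]
      intro x hx
      obtain ⟨j, hj, rfl⟩ := List.mem_iff_getElem.mp hx
      have hjlen : j < L.length := lt_of_lt_of_le hj (by simp)
      have hji : j < i := by
        have := hj
        simp [List.length_take] at this
        omega
      have hrel := hL.rel_get_of_lt (a := ⟨j, hjlen⟩) (b := ⟨i, hi⟩) (by exact hji)
      simp only [List.get_eq_getElem] at hrel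
      have : (L.take i)[j] = L[j] := List.getElem_take ..
      rw [this]
      simpa using hrel
    have h2 : (L.drop i).filter (fun x => decide (a < x)) = [] := by
      rw [List.filter_eq_nil_iff]
      intro x hx
      obtain ⟨j, hj, rfl⟩ := List.mem_iff_getElem.mp hx
      have hjlen : i + j < L.length := by
        simp [List.length_drop] at hj
        omega
      have : (L.drop i)[j] = L[i + j] := by
        rw [List.getElem_drop]
      rw [this]
      rcases Nat.eq_zero_or_pos j with rfl | hj0
      · simp [ha]
      · have hrel := hL.rel_get_of_lt (a := ⟨i, hi⟩) (b := ⟨i + j, hjlen⟩) (by simp; omega)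
        simp only [List.get_eq_getElem] at hrel
        simp
        omega
    rw [h1, h2, List.append_nil]
  have hnodup : L.Nodup := hL.nodup
  have hset : L.toFinset.filter (fun x => a < x) = (L.filter (fun x => decide (a < x))).toFinset := by
    ext z
    simp [List.mem_filter]
  rw [hset, hfil]
  have hnd : (L.take i).Nodup := hnodup.sublist (List.take_sublist i L)
  rw [List.card_toFinset, hnd.dedup]
  simp [List.length_take]
  omega

lemma rank_injective {D : Finset ℕ} {x y : ℕ} (hx : x ∈ D) (hy : y ∈ D)
    (h : (D.filter fun z => x < z).card = (D.filter fun z => y < z).card) : x = y := by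
  by_contra hne
  have key : ∀ a b : ℕ, a ∈ D → b ∈ D → a < b →
      (D.filter fun z => b < z).card < (D.filter fun z => a < z).card := by
    intro a b ha hb hab
    apply Finset.card_lt_card
    constructor
    · intro z hz
      simp [Finset.mem_filter] at hz ⊢
      exact ⟨hz.1, by omega⟩
    · intro hsub
      have hmem : b ∈ D.filter fun z => a < z := Finset.mem_filter.mpr ⟨hb, hab⟩
      have := hsub hmem
      simp [Finset.mem_filter] at this
  rcases lt_or_gt_of_ne hne with h' | h'
  · have := key x y hx hy h'
    omega
  · have := key y x hy hx h'
    omega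

lemma sdesc_rank (D : Finset ℕ) (i : ℕ) (hi : i < D.card) :
    (sdesc D).getD i 0 ∈ D ∧ (D.filter fun x => (sdesc D).getD i 0 < x).card = i := by
  have hlen : i < (sdesc D).length := by rw [sdesc_length]; exact hi
  rw [List.getD_eq_getElem _ _ hlen]
  constructor
  · rw [← mem_sdesc]
    exact List.getElem_mem _
  · have := rank_of_sorted (sdesc D) (sdesc_sorted D) i hlen
    rwa [sdesc_toFinset] at this

lemma sdesc_strict {D : Finset ℕ} {i j : ℕ} (hij : i < j) (hj : j < D.card) :
    (sdesc D).getD j 0 < (sdesc D).getD i 0 := by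
  have hjl : j < (sdesc D).length := by rw [sdesc_length]; exact hj
  have hil : i < (sdesc D).length := by omega
  rw [List.getD_eq_getElem _ _ hjl, List.getD_eq_getElem _ _ hil]
  have := (sdesc_sorted D).rel_get_of_lt (a := ⟨i, hil⟩) (b := ⟨j, hjl⟩) (by exact hij)
  simpa using this

lemma sdesc_countP (D : Finset ℕ) (p : ℕ → Bool) :
    (sdesc D).countP p = (D.filter (p ·)).card := by
  rw [List.countP_eq_length_filter]
  have : ((sdesc D).filter p).toFinset = D.filter (p ·) := by
    rw [List.toFinset_filter, sdesc_toFinset]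
  rw [← this, List.card_toFinset, ((sdesc_nodup D).filter p).dedup]

/-- Domination of weakly sorted lists from dominance of counts. -/
lemma ldom : ∀ (L M : List ℕ), L.Pairwise (· ≥ ·) → M.Pairwise (· ≥ ·) → (∀ x ∈ M, 1 ≤ x) →
    (∀ v, 1 ≤ v → M.countP (fun x => decide (v ≤ x)) ≤ L.countP (fun x => decide (v ≤ x))) →
    ∀ i, M.getD i 0 ≤ L.getD i 0 := by
  intro L
  induction L with
  | nil =>
    intro M hL hM hM1 hcnt i
    cases M with
    | nil => simp
    | cons b M' =>
      exfalso
      have h1 := hcnt b (hM1 b (List.mem_cons_self))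
      rw [List.countP_nil] at h1
      rw [List.countP_cons] at h1
      simp at h1
  | cons a L' ih =>
    intro M hL hM hM1 hcnt i
    cases M with
    | nil => simp
    | cons b M' =>
      have hb1 : 1 ≤ b := hM1 b (List.mem_cons_self)
      have hba : b ≤ a := by
        by_contra hab
        have h1 := hcnt b hb1
        have h2 : (a :: L').countP (fun x => decide (b ≤ x)) = 0 := by
          rw [List.countP_eq_zero]
          intro x hx
          rcases List.mem_cons.mp hx with rfl | hx'
          · simp; omega
          · have := List.rel_of_pairwise_cons hL hx'
            simp; omega
        rw [h2] at h1
        rw [List.countP_cons] at h1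
        simp at h1
      cases i with
      | zero => simpa using hba
      | succ i =>
        simp only [List.getD_cons_succ]
        apply ih M' hL.of_cons hM.of_cons (fun x hx => hM1 x (List.mem_cons_of_mem b hx))
        intro v hv
        by_cases hvb : v ≤ b
        · have h1 := hcnt v hv
          rw [List.countP_cons, List.countP_cons] at h1
          have hvb' : decide (v ≤ b) = true := by simp; omega
          have hva' : decide (v ≤ a) = true := by simp; omega
          rw [hvb', hva'] at h1
          omega
        · have : M'.countP (fun x => decide (v ≤ x)) = 0 := by
            rw [List.countP_eq_zero]
            intro x hx
            have := List.rel_of_pairwise_cons hM hx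
            simp; omega
          rw [this]
          omega

lemma sorted_ge_of_gt {L : List ℕ} (h : L.Pairwise (· > ·)) : L.Pairwise (· ≥ ·) :=
  h.imp (fun hab => le_of_lt hab)

end StmtAux4

section StmtAux5

open Finset

lemma rangeDC (p : ℕ → Prop) [DecidablePred p] (W : ℕ) (hdown : ∀ c, p (c + 1) → p c)
    (hbound : ∀ c, p c → c < W) (k : ℕ) :
    p k ↔ k < ((Finset.range W).filter p).card := by
  have pstep : ∀ d a, p (a + d) → p a := by
    intro d
    induction d with
    | zero => intro a ha; exact ha
    | succ d ihd => intro a ha; exact ihd a (hdown _ (by rwa [Nat.add_succ] at ha))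
  have hmem : ∀ m, m ∈ (Finset.range W).filter p ↔ p m := by
    intro m
    rw [Finset.mem_filter, Finset.mem_range]
    exact ⟨fun h => h.2, fun h => ⟨hbound m h, h⟩⟩
  have hdc : ∀ a b : ℕ, a ≤ b → b ∈ (Finset.range W).filter p → a ∈ (Finset.range W).filter p := by
    intro a b hab hb
    rw [hmem] at hb ⊢
    have : a + (b - a) = b := by omega
    exact pstep (b - a) a (by rwa [this])
  rw [← hmem]
  exact natDC _ hdc k

/-- The shape of the sorted contretableau associated with a skyline filling. -/
noncomputable def rshape {n : ℕ} (F : SkylineFilling n) : Fin n → ℕ :=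
  fun i => ((Finset.range F.width).filter fun c => (i : ℕ) < (F.colSet (c + 1)).card).card

/-- The entries of the sorted contretableau associated with a skyline filling. -/
noncomputable def rentry {n : ℕ} (F : SkylineFilling n) : Fin n → ℕ → ℕ :=
  fun i k => if 1 ≤ k ∧ k ≤ rshape F i then (sdesc (F.colSet k)).getD i 0 else 0

/-- The sorted contretableau associated with a skyline filling. -/
noncomputable def rCT {n : ℕ} (F : SkylineFilling n) : Filling n :=
  { shape := rshape F, entry := rentry F }

namespace SSKIfacts

variable {n : ℕ} {F : SkylineFilling n} (hF : SSKIprop n F)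

include hF

lemma rshape_iff (i : Fin n) (k : ℕ) (hk : 1 ≤ k) :
    k ≤ rshape F i ↔ (i : ℕ) < (F.colSet k).card := by
  have key := rangeDC (fun c => (i : ℕ) < (F.colSet (c + 1)).card) F.width
    (fun c hc => lt_of_lt_of_le hc (card_colSet_mono hF (c + 1) (by omega)))
    (fun c hc => by
      by_contra hw
      have hcw : F.width < c + 1 := by omega
      rw [colSet_empty_of_wide hF _ hcw] at hc
      simp at hc)
    (k - 1)
  have hk1 : k - 1 + 1 = k := by omega
  rw [hk1] at key
  unfold rshape
  constructor
  · intro h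
    have := key.mpr (by omega)
    exact this
  · intro h
    have := key.mp h
    omega

lemma rshape_anti (i j : Fin n) (hij : i ≤ j) : rshape F j ≤ rshape F i := by
  apply Finset.card_le_card
  intro c hc
  simp only [Finset.mem_filter] at hc ⊢
  have : (i : ℕ) ≤ (j : ℕ) := hij
  exact ⟨hc.1, by omega⟩

lemma count_filter_decide (D : Finset ℕ) (v : ℕ) :
    (sdesc D).countP (fun x => decide (v ≤ x)) = (D.filter fun x => v ≤ x).card := by
  rw [sdesc_countP]
  congr 1
  simp

lemma rentry_le (i : Fin n) (k : ℕ) (h1 : 1 ≤ k) (h2 : k + 1 ≤ rshape F i) :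
    rentry F i (k + 1) ≤ rentry F i k := by
  have hk : k ≤ rshape F i := by omega
  rw [rentry, rentry, if_pos ⟨by omega, h2⟩, if_pos ⟨h1, hk⟩]
  apply ldom (sdesc (F.colSet k)) (sdesc (F.colSet (k + 1)))
    (sorted_ge_of_gt (sdesc_sorted _)) (sorted_ge_of_gt (sdesc_sorted _))
  · intro x hx
    have := colSet_subset hF (k + 1) (by omega) (mem_sdesc.mp hx)
    rw [Finset.mem_Icc] at this
    omega
  · intro v hv
    rw [count_filter_decide hF, count_filter_decide hF]
    exact count_mono hF k h1 v hv

lemma rCT_isCT : (rCT F).IsCT n := by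
  refine ⟨?_, ?_, ?_, ?_, ?_⟩
  · intro i j hij
    exact rshape_anti hF i j hij
  · intro i k h1 h2
    exact rentry_le hF i k h1 h2
  · intro i j k hij h1 h2
    have hij' : (i : ℕ) < (j : ℕ) := hij
    have hji : k ≤ rshape F i := le_trans h2 (rshape_anti hF i j (le_of_lt hij))
    have hcard : (j : ℕ) < (F.colSet k).card := (rshape_iff hF j k h1).mp h2
    show rentry F j k < rentry F i k
    rw [rentry, rentry, if_pos ⟨h1, h2⟩, if_pos ⟨h1, hji⟩]
    exact sdesc_strict hij' hcard
  · intro i k h1 h2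
    show 1 ≤ rentry F i k ∧ rentry F i k ≤ n
    rw [rentry, if_pos ⟨h1, h2⟩]
    have hcard : (i : ℕ) < (F.colSet k).card := (rshape_iff hF i k h1).mp h2
    have hmem := (sdesc_rank (F.colSet k) i hcard).1
    have := colSet_subset hF k h1 hmem
    rw [Finset.mem_Icc] at this
    exact this
  · intro i k hk
    show rentry F i k = 0
    rcases hk with rfl | hk
    · rw [rentry, if_neg]; omega
    · rw [rentry, if_neg]
      rw [rCT] at hk
      simp only at hk
      omega

lemma rCT_colList (k : ℕ) : ((rCT F).colList k).toFinset = F.colSet k := by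
  rcases Nat.eq_zero_or_pos k with rfl | hk
  · rw [colSet_zero hF]
    rw [Filling.colList]
    have : ∀ i : Fin n, (if 1 ≤ 0 ∧ 0 ≤ (rCT F).shape i then some ((rCT F).entry i 0) else none)
        = none := by intro i; rw [if_neg]; omega
    simp [this]
  · ext v
    rw [List.mem_toFinset, Filling.colList, List.mem_filterMap]
    constructor
    · rintro ⟨i, -, hi⟩
      by_cases hc : 1 ≤ k ∧ k ≤ (rCT F).shape i
      · rw [if_pos hc] at hi
        have hv := Option.some_inj.mp hi
        simp only [rCT] at hc
        have hcard : (i : ℕ) < (F.colSet k).card := (rshape_iff hF i k hk).mp hc.2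
        have hmem := (sdesc_rank (F.colSet k) i hcard).1
        have : (rCT F).entry i k = (sdesc (F.colSet k)).getD i 0 := by
          show rentry F i k = _
          rw [rentry, if_pos hc]
        rw [← hv, this]
        exact hmem
      · rw [if_neg hc] at hi
        exact absurd hi (by simp)
    · intro hv
      have hvl : v ∈ sdesc (F.colSet k) := mem_sdesc.mpr hv
      obtain ⟨j, hj, hjv⟩ := List.mem_iff_getElem.mp hvl
      have hjcard : j < (F.colSet k).card := by rwa [sdesc_length] at hj
      have hjn : j < n := lt_of_lt_of_le hjcard (card_colSet_le_n hF k hk)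
      refine ⟨⟨j, hjn⟩, List.mem_finRange _, ?_⟩
      have hsh : k ≤ rshape F ⟨j, hjn⟩ := (rshape_iff hF ⟨j, hjn⟩ k hk).mpr hjcard
      rw [if_pos ⟨hk, hsh⟩]
      have : (rCT F).entry ⟨j, hjn⟩ k = (sdesc (F.colSet k)).getD j 0 := by
        show rentry F _ k = _
        rw [rentry, if_pos ⟨hk, hsh⟩]
      rw [this, List.getD_eq_getElem _ _ hj, hjv]

end SSKIfacts

end StmtAux5

section StmtAux6

open Finset

lemma Filling.ext' {n : ℕ} {T T' : Filling n} (h1 : T.shape = T'.shape)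
    (h2 : T.entry = T'.entry) : T = T' := by
  cases T; cases T'
  simp only at h1 h2
  subst h1; subst h2
  rfl

lemma SkylineFilling.ext' {n : ℕ} {F G : SkylineFilling n} (h1 : F.shape = G.shape)
    (h2 : F.inner = G.inner) (h3 : F.basement = G.basement) (h4 : F.entry = G.entry) :
    F = G := by
  cases F; cases G
  simp only at h1 h2 h3 h4
  subst h1; subst h2; subst h3; subst h4
  rfl

namespace CTfacts

variable {n : ℕ} {T : Filling n} (hT : T.IsCT n)

lemma mem_colFinset_iff {k v : ℕ} :
    v ∈ (T.colList k).toFinset ↔ ∃ i : Fin n, 1 ≤ k ∧ k ≤ T.shape i ∧ T.entry i k = v := by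
  rw [List.mem_toFinset, Filling.colList, List.mem_filterMap]
  constructor
  · rintro ⟨i, -, hi⟩
    by_cases hc : 1 ≤ k ∧ k ≤ T.shape i
    · rw [if_pos hc] at hi
      exact ⟨i, hc.1, hc.2, Option.some_inj.mp hi⟩
    · rw [if_neg hc] at hi
      exact absurd hi (by simp)
  · rintro ⟨i, h1, h2, h3⟩
    exact ⟨i, List.mem_finRange i, by rw [if_pos ⟨h1, h2⟩, h3]⟩

lemma colFinset_zero : (T.colList 0).toFinset = ∅ := by
  rw [Finset.eq_empty_iff_forall_notMem]
  intro v hv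
  obtain ⟨i, h1, -⟩ := mem_colFinset_iff.mp hv
  omega

include hT

lemma colFinset_wide {k : ℕ} (hk : Finset.univ.sup T.shape < k) :
    (T.colList k).toFinset = ∅ := by
  rw [Finset.eq_empty_iff_forall_notMem]
  intro v hv
  obtain ⟨i, h1, h2, -⟩ := mem_colFinset_iff.mp hv
  have : T.shape i ≤ Finset.univ.sup T.shape := Finset.le_sup (Finset.mem_univ i)
  omega

lemma colFinset_subset (k : ℕ) : (T.colList k).toFinset ⊆ Finset.Icc 1 n := by
  intro v hv
  obtain ⟨i, h1, h2, h3⟩ := mem_colFinset_iff.mp hv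
  rw [Finset.mem_Icc, ← h3]
  exact hT.2.2.2.1 i k h1 h2

lemma zero_not_mem_colFinset (k : ℕ) : 0 ∉ (T.colList k).toFinset := by
  intro h
  have := colFinset_subset hT k h
  simp at this

lemma count_rows_eq (k : ℕ) (hk : 1 ≤ k) (v : ℕ) :
    (Finset.univ.filter fun i : Fin n => k ≤ T.shape i ∧ v ≤ T.entry i k).card =
      (((T.colList k).toFinset).filter fun x => v ≤ x).card := by
  refine Finset.card_bij (fun i _ => T.entry i k) ?_ ?_ ?_
  · intro i hi
    simp only [Finset.mem_filter, Finset.mem_univ, true_and] at hi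
    exact Finset.mem_filter.mpr ⟨mem_colFinset_iff.mpr ⟨i, hk, hi.1, rfl⟩, hi.2⟩
  · intro i hi j hj hij
    simp only [Finset.mem_filter, Finset.mem_univ, true_and] at hi hj
    have hij' : T.entry i k = T.entry j k := hij
    by_contra hne
    rcases lt_or_gt_of_ne hne with h | h
    · have := hT.2.2.1 i j k h hk hj.1
      omega
    · have := hT.2.2.1 j i k h hk hi.1
      omega
  · intro w hw
    rw [Finset.mem_filter] at hw
    obtain ⟨i, -, h2, h3⟩ := mem_colFinset_iff.mp hw.1
    exact ⟨i, by simp only [Finset.mem_filter, Finset.mem_univ, true_and]; exact ⟨h2, by omega⟩, h3⟩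

lemma card_rows_eq (k : ℕ) (hk : 1 ≤ k) :
    (Finset.univ.filter fun i : Fin n => k ≤ T.shape i).card = ((T.colList k).toFinset).card := by
  have h := count_rows_eq hT k hk 0
  simpa using h

lemma shape_iff (i : Fin n) (k : ℕ) (hk : 1 ≤ k) :
    k ≤ T.shape i ↔ (i : ℕ) < ((T.colList k).toFinset).card := by
  rw [← card_rows_eq hT k hk]
  have hdc : ∀ a b : Fin n, a ≤ b → b ∈ (Finset.univ.filter fun i : Fin n => k ≤ T.shape i) →
      a ∈ (Finset.univ.filter fun i : Fin n => k ≤ T.shape i) := by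
    intro a b hab hb
    simp only [Finset.mem_filter, Finset.mem_univ, true_and] at hb ⊢
    exact le_trans hb (hT.1 a b hab)
  have := finDC _ hdc i
  simp only [Finset.mem_filter, Finset.mem_univ, true_and] at this
  exact this

lemma ct_rank (i : Fin n) (k : ℕ) (hk : 1 ≤ k) (hsh : k ≤ T.shape i) :
    T.entry i k ∈ (T.colList k).toFinset ∧
      (((T.colList k).toFinset).filter fun x => T.entry i k < x).card = i := by
  refine ⟨mem_colFinset_iff.mpr ⟨i, hk, hsh, rfl⟩, ?_⟩
  have hcard := finCardLt (n := n) (i : ℕ) (le_of_lt i.isLt)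
  rw [← hcard]
  symm
  refine Finset.card_bij (fun j _ => T.entry j k) ?_ ?_ ?_
  · intro j hj
    simp only [Finset.mem_filter, Finset.mem_univ, true_and] at hj
    have hji : j ≤ i := by
      rw [Fin.le_def]; omega
    have hshj : k ≤ T.shape j := le_trans hsh (hT.1 j i hji)
    have hlt : T.entry i k < T.entry j k := hT.2.2.1 j i k (by rw [Fin.lt_def]; omega) hk hsh
    exact Finset.mem_filter.mpr ⟨mem_colFinset_iff.mpr ⟨j, hk, hshj, rfl⟩, hlt⟩
  · intro a ha b hb hab
    simp only [Finset.mem_filter, Finset.mem_univ, true_and] at ha hb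
    have hab' : T.entry a k = T.entry b k := hab
    by_contra hne
    have hai : a ≤ i := by rw [Fin.le_def]; omega
    have hbi : b ≤ i := by rw [Fin.le_def]; omega
    rcases lt_or_gt_of_ne hne with h | h
    · have := hT.2.2.1 a b k h hk (le_trans hsh (hT.1 b i hbi))
      omega
    · have := hT.2.2.1 b a k h hk (le_trans hsh (hT.1 a i hai))
      omega
  · intro y hy
    rw [Finset.mem_filter] at hy
    obtain ⟨j, -, hshj, hje⟩ := mem_colFinset_iff.mp hy.1
    have hji : (j : ℕ) < (i : ℕ) := by
      rcases lt_trichotomy (j : ℕ) (i : ℕ) with h | h | h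
      · exact h
      · exfalso; have : j = i := Fin.ext h; subst this; omega
      · exfalso
        have := hT.2.2.1 i j k (by rw [Fin.lt_def]; omega) hk hshj
        omega
    exact ⟨j, by simp only [Finset.mem_filter, Finset.mem_univ, true_and]; exact hji, hje⟩

end CTfacts

lemma CT_det {n : ℕ} {T T' : Filling n} (hT : T.IsCT n) (hT' : T'.IsCT n)
    (hcol : ∀ k, (T.colList k).toFinset = (T'.colList k).toFinset) : T = T' := by
  have hsh : ∀ i, T.shape i = T'.shape i := by
    intro i
    have h1 : ∀ k, 1 ≤ k → (k ≤ T.shape i ↔ k ≤ T'.shape i) := by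
      intro k hk
      rw [CTfacts.shape_iff hT i k hk, CTfacts.shape_iff hT' i k hk, hcol k]
    rcases Nat.lt_trichotomy (T.shape i) (T'.shape i) with h | h | h
    · exfalso
      have hk := (h1 (T'.shape i) (by omega)).mpr le_rfl
      omega
    · exact h
    · exfalso
      have hk := (h1 (T.shape i) (by omega)).mp le_rfl
      omega
  apply Filling.ext'
  · funext i; exact hsh i
  · funext i k
    rcases Nat.eq_zero_or_pos k with rfl | hk
    · rw [hT.2.2.2.2 i 0 (Or.inl rfl), hT'.2.2.2.2 i 0 (Or.inl rfl)]
    · by_cases hs : k ≤ T.shape i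
      · have hs' : k ≤ T'.shape i := by rw [← hsh i]; exact hs
        have r1 := CTfacts.ct_rank hT i k hk hs
        have r2 := CTfacts.ct_rank hT' i k hk hs'
        rw [← hcol k] at r2
        exact rank_injective r1.1 r2.1 (by rw [r1.2, r2.2])
      · have hs' : ¬ k ≤ T'.shape i := by rw [← hsh i]; exact hs
        rw [hT.2.2.2.2 i k (Or.inr (by omega)), hT'.2.2.2.2 i k (Or.inr (by omega))]

end StmtAux6

section StmtAux7

open Finset

/-- The greedily constructed columns of a skyline filling with the column sets of `T`. -/
noncomputable def gcols {n : ℕ} (T : Filling n) : ℕ → Fin n → ℕ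
  | 0 => fun i => (i : ℕ) + 1
  | k + 1 => place n ((T.colList (k + 1)).toFinset) (gcols T k)

lemma base_count {n : ℕ} (D : Finset ℕ) (hD : D ⊆ Finset.Icc 1 n) (v : ℕ) (hv : 1 ≤ v) :
    (D.filter fun x => v ≤ x).card ≤
      (Finset.univ.filter fun i : Fin n => v ≤ (i : ℕ) + 1).card := by
  have h1 : (Finset.univ.filter fun i : Fin n => v ≤ (i : ℕ) + 1)
      = (Finset.univ.filter fun i : Fin n => v - 1 ≤ (i : ℕ)) := by
    ext i
    simp only [Finset.mem_filter, Finset.mem_univ, true_and]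
    omega
  rw [h1, finCardGe]
  have h2 : (D.filter fun x => v ≤ x) ⊆ Finset.Icc v n := by
    intro x hx
    rw [Finset.mem_filter] at hx
    have := hD hx.1
    rw [Finset.mem_Icc] at this ⊢
    omega
  have h3 := Finset.card_le_card h2
  rw [Nat.card_Icc] at h3
  omega

/-- The shape of the greedily constructed skyline filling. -/
noncomputable def gshape {n : ℕ} (T : Filling n) : Fin n → ℕ :=
  fun i => ((Finset.range (Finset.univ.sup T.shape)).filter fun c => gcols T (c + 1) i ≠ 0).card

/-- The greedily constructed skyline filling with the column sets of `T`. -/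
noncomputable def gF {n : ℕ} (T : Filling n) : SkylineFilling n :=
  { shape := gshape T, inner := fun _ => 0, basement := fun i => (i : ℕ) + 1,
    entry := fun i k => gcols T k i }

namespace Greedy

variable {n : ℕ} {T : Filling n} (hT : T.IsCT n)

include hT

lemma count_mono_ct (k : ℕ) (hk : 1 ≤ k) (v : ℕ) :
    (((T.colList (k + 1)).toFinset).filter fun x => v ≤ x).card ≤
      (((T.colList k).toFinset).filter fun x => v ≤ x).card := by
  rw [← CTfacts.count_rows_eq hT (k + 1) (by omega) v, ← CTfacts.count_rows_eq hT k hk v]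
  apply Finset.card_le_card
  intro i hi
  simp only [Finset.mem_filter, Finset.mem_univ, true_and] at hi ⊢
  obtain ⟨h1, h2⟩ := hi
  have hdec := hT.2.1 i k hk h1
  exact ⟨by omega, le_trans h2 hdec⟩

lemma gvalid : ∀ k : ℕ, ValidCol n ((T.colList (k + 1)).toFinset) (gcols T k) (gcols T (k + 1)) := by
  intro k
  induction k with
  | zero =>
    show ValidCol n _ _ (place n _ _)
    apply place_valid _ _ _ le_rfl (CTfacts.zero_not_mem_colFinset hT 1)
    intro v hv
    exact base_count _ (CTfacts.colFinset_subset hT 1) v hv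
  | succ k ih =>
    show ValidCol n _ _ (place n _ _)
    apply place_valid _ _ _ le_rfl (CTfacts.zero_not_mem_colFinset hT (k + 2))
    intro v hv
    have h1 := valid_card ih v hv
    rw [h1]
    exact count_mono_ct hT (k + 1) (by omega) v

lemma gcols_ne_iff (i : Fin n) (k : ℕ) (hk : 1 ≤ k) :
    gcols T k i ≠ 0 ↔ k ≤ gshape T i := by
  have hdown : ∀ c, gcols T (c + 1 + 1) i ≠ 0 → gcols T (c + 1) i ≠ 0 := by
    intro c hc
    have hV := gvalid hT (c + 1)
    have h1 := (hV.1 i hc).2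
    have h2 := (hV.1 i hc).1
    have h3 : gcols T (c + 1 + 1) i ≠ 0 := hc
    omega
  have hbound : ∀ c, gcols T (c + 1) i ≠ 0 → c < Finset.univ.sup T.shape := by
    intro c hc
    by_contra hw
    have hwide : Finset.univ.sup T.shape < c + 1 := by omega
    have hempty := CTfacts.colFinset_wide hT hwide
    have : gcols T (c + 1) i = 0 := by
      show place n ((T.colList (c + 1)).toFinset) (gcols T c) i = 0
      rw [hempty, place_empty]
    exact hc this
  have key := rangeDC (fun c => gcols T (c + 1) i ≠ 0) (Finset.univ.sup T.shape)
    hdown hbound (k - 1)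
  have hk1 : k - 1 + 1 = k := by omega
  rw [hk1] at key
  unfold gshape
  constructor
  · intro h
    have := key.mp h
    omega
  · intro h
    exact key.mpr (by omega)

lemma claimBg : ∀ (d : ℕ) (i j : Fin n) (k : ℕ), i < j → k + d = gshape T i →
    gshape T i < gshape T j → k + 1 ≤ gshape T j → gcols T k i < gcols T (k + 1) j := by
  intro d
  induction d with
  | zero =>
    intro i j k hij hkd hsh hsj
    have hj_ne : gcols T (k + 1) j ≠ 0 := (gcols_ne_iff hT j (k + 1) (by omega)).mpr hsj
    by_contra hle
    push_neg at hle
    have h3 := (gvalid hT k).2.2 i j hij hj_ne hle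
    have hi0 : gcols T (k + 1) i = 0 := by
      by_contra hne
      have := (gcols_ne_iff hT i (k + 1) (by omega)).mp hne
      omega
    omega
  | succ d ihd =>
    intro i j k hij hkd hsh hsj
    have h1 : gcols T (k + 1) i < gcols T (k + 1 + 1) j :=
      ihd i j (k + 1) hij (by omega) hsh (by omega)
    have hj2 : gcols T (k + 1 + 1) j ≠ 0 :=
      (gcols_ne_iff hT j (k + 1 + 1) (by omega)).mpr (by omega)
    have hrow : gcols T (k + 1 + 1) j ≤ gcols T (k + 1) j := ((gvalid hT (k + 1)).1 j hj2).2
    by_contra hle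
    push_neg at hle
    have hjne : gcols T (k + 1) j ≠ 0 := by omega
    have h3 := (gvalid hT k).2.2 i j hij hjne hle
    omega

lemma gF_prop : SSKIprop n (gF T) := by
  refine ⟨rfl, rfl, ⟨?_, ?_, ?_, ?_, ?_, ?_⟩, ?_, ?_⟩
  · intro i
    exact Nat.zero_le _
  · intro i k hk
    have hk0 : k = 0 := Nat.le_zero.mp hk
    subst hk0
    rfl
  · intro i
    rfl
  · intro i k hk
    show gcols T (k + 1) i ≤ gcols T k i
    have hk' : k + 1 ≤ gshape T i := hk
    have hne : gcols T (k + 1) i ≠ 0 := (gcols_ne_iff hT i (k + 1) (by omega)).mpr hk'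
    exact ((gvalid hT k).1 i hne).2
  · -- type A triples
    intro i j k hij hss h1 h2
    show SkylineFilling.Inversion (gcols T k i) (gcols T k j) (gcols T (k - 1) i)
    have hss' : gshape T j ≤ gshape T i := hss
    have h2' : k ≤ gshape T j := h2
    have hsi : k ≤ gshape T i := le_trans h2' hss'
    have hine : gcols T k i ≠ 0 := (gcols_ne_iff hT i k h1).mpr hsi
    have hjne : gcols T k j ≠ 0 := (gcols_ne_iff hT j k h1).mpr h2'
    have hVk := gvalid hT (k - 1)
    have hk1 : k - 1 + 1 = k := by omega
    rw [hk1] at hVk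
    have hrowi : gcols T k i ≤ gcols T (k - 1) i := (hVk.1 i hine).2
    by_cases hcase : gcols T k j ≤ gcols T (k - 1) i
    · exact Or.inl ⟨hVk.2.2 i j hij hjne hcase, hrowi⟩
    · exact Or.inr ⟨hrowi, by omega⟩
  · -- type B triples
    intro i j k hij hss h1 h2
    show SkylineFilling.Inversion (gcols T (k + 1) j) (gcols T k i) (gcols T k j)
    have hss' : gshape T i < gshape T j := hss
    have h1' : k ≤ gshape T i := h1
    have h2' : k + 1 ≤ gshape T j := h2
    have hlt := claimBg hT (gshape T i - k) i j k hij (by omega) hss' h2'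
    have hjne : gcols T (k + 1) j ≠ 0 := (gcols_ne_iff hT j (k + 1) (by omega)).mpr h2'
    have hrow : gcols T (k + 1) j ≤ gcols T k j := ((gvalid hT k).1 j hjne).2
    exact Or.inl ⟨hlt, hrow⟩
  · -- entries in [n]
    intro i k h1 h2
    have h1' : 0 < k := h1
    have h2' : k ≤ gshape T i := h2
    show 1 ≤ gcols T k i ∧ gcols T k i ≤ n
    have hne : gcols T k i ≠ 0 := (gcols_ne_iff hT i k h1').mpr h2'
    have hVk := gvalid hT (k - 1)
    have hk1 : k - 1 + 1 = k := by omega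
    rw [hk1] at hVk
    have hmem := (hVk.1 i hne).1
    have := CTfacts.colFinset_subset hT k hmem
    rw [Finset.mem_Icc] at this
    exact this
  · -- normalized
    intro i k hk
    have hk' : gshape T i < k := hk
    show gcols T k i = 0
    by_contra hne
    have h1 : 1 ≤ k := by omega
    have := (gcols_ne_iff hT i k h1).mp hne
    omega

lemma gF_colSet (k : ℕ) : (gF T).colSet k = (T.colList k).toFinset := by
  rcases Nat.eq_zero_or_pos k with rfl | hk
  · rw [SSKIfacts.colSet_zero (gF_prop hT), CTfacts.colFinset_zero]
  · ext v
    rw [SSKIfacts.mem_colSet_iff (gF_prop hT) hk]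
    constructor
    · rintro ⟨i, hsh, he⟩
      have hsh' : k ≤ gshape T i := hsh
      have he' : gcols T k i = v := he
      have hne : gcols T k i ≠ 0 := (gcols_ne_iff hT i k hk).mpr hsh'
      have hVk := gvalid hT (k - 1)
      have hk1 : k - 1 + 1 = k := by omega
      rw [hk1] at hVk
      have := (hVk.1 i hne).1
      rwa [he'] at this
    · intro hv
      have hVk := gvalid hT (k - 1)
      have hk1 : k - 1 + 1 = k := by omega
      rw [hk1] at hVk
      obtain ⟨i, hi⟩ := hVk.2.1 v hv
      have hvne : v ≠ 0 := by
        intro h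
        exact CTfacts.zero_not_mem_colFinset hT k (h ▸ hv)
      have hne : gcols T k i ≠ 0 := by rw [hi]; exact hvne
      exact ⟨i, (gcols_ne_iff hT i k hk).mp hne, hi⟩

lemma rCT_gF : rCT (gF T) = T := by
  apply CT_det (SSKIfacts.rCT_isCT (gF_prop hT)) hT
  intro k
  rw [SSKIfacts.rCT_colList (gF_prop hT) k, gF_colSet hT k]

end Greedy

lemma gcols_rCT {n : ℕ} {Y : SkylineFilling n} (hY : SSKIprop n Y) :
    ∀ k, gcols (rCT Y) k = fun i => Y.entry i k := by
  intro k
  induction k with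
  | zero =>
    funext i
    show (i : ℕ) + 1 = Y.entry i 0
    rw [SSKIfacts.e0 hY]
  | succ k ih =>
    show place n (((rCT Y).colList (k + 1)).toFinset) (gcols (rCT Y) k) = _
    rw [SSKIfacts.rCT_colList hY (k + 1), ih]
    have hplace : ValidCol n (Y.colSet (k + 1)) (fun i => Y.entry i k)
        (place n (Y.colSet (k + 1)) (fun i => Y.entry i k)) := by
      apply place_valid _ _ _ le_rfl (SSKIfacts.zero_not_mem_colSet hY (k + 1) (by omega))
      intro v hv
      rcases Nat.eq_zero_or_pos k with rfl | hk
      · have hbase : (Finset.univ.filter fun i : Fin n => v ≤ Y.entry i 0)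
            = Finset.univ.filter fun i : Fin n => v ≤ (i : ℕ) + 1 := by
          ext i
          simp only [Finset.mem_filter, Finset.mem_univ, true_and, SSKIfacts.e0 hY]
        rw [hbase]
        exact base_count _ (SSKIfacts.colSet_subset hY 1 le_rfl) v hv
      · have h1 := valid_card (SSKIfacts.valid_of_ssk hY k hk) v hv
        rw [h1]
        exact SSKIfacts.count_mono hY k hk v hv
    have hcol := SSKIfacts.valid_of_ssk hY (k + 1) (by omega)
    have hkk : k + 1 - 1 = k := by omega
    rw [hkk] at hcol
    exact valid_unique hplace hcol

lemma gF_rCT {n : ℕ} {Y : SkylineFilling n} (hY : SSKIprop n Y) : gF (rCT Y) = Y := by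
  have hcols := gcols_rCT hY
  have hTY : (rCT Y).IsCT n := SSKIfacts.rCT_isCT hY
  apply SkylineFilling.ext'
  · funext i
    show gshape (rCT Y) i = Y.shape i
    have hiff : ∀ k, 1 ≤ k → (k ≤ gshape (rCT Y) i ↔ k ≤ Y.shape i) := by
      intro k hk
      rw [← Greedy.gcols_ne_iff hTY i k hk, hcols k]
      exact SSKIfacts.ne_zero_iff hY i k hk
    rcases Nat.lt_trichotomy (gshape (rCT Y) i) (Y.shape i) with h | h | h
    · exfalso
      have := (hiff (Y.shape i) (by omega)).mpr le_rfl
      omega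
    · exact h
    · exfalso
      have := (hiff (gshape (rCT Y) i) (by omega)).mp le_rfl
      omega
  · rw [hY.1]; rfl
  · rw [hY.2.1]; rfl
  · funext i k
    show gcols (rCT Y) k i = Y.entry i k
    rw [hcols k]

end StmtAux7


theorem stmt8 (n : ℕ) :
    ∃ ρ : {F : SkylineFilling n // F.inner = (fun _ => 0) ∧
        F.basement = (fun i : Fin n => (i : ℕ) + 1) ∧ F.IsSSK ∧ F.EntriesIn n ∧ F.Normalized} →
      {T : Filling n // T.IsCT n},
      Function.Bijective ρ ∧
        ∀ Y k, ((ρ Y).1.colList k).toFinset = Y.1.colSet k := by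
  refine ⟨fun Y => ⟨rCT Y.1, SSKIfacts.rCT_isCT Y.2⟩, ?_, ?_⟩
  · rw [Function.bijective_iff_has_inverse]
    refine ⟨fun T => ⟨gF T.1, Greedy.gF_prop T.2⟩, ?_, ?_⟩
    · intro Y
      apply Subtype.ext
      exact gF_rCT Y.2
    · intro T
      apply Subtype.ext
      exact Greedy.rCT_gF T.2
  · intro Y k
    exact SSKIfacts.rCT_colList Y.2 k
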